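/- Let E be an isoperimetric-isodiametric set in (M, g) with enclosing ball B = B_{rad(E)}(x₀). Then E minimizes perimeter among volume-preserving compactly supported perturbations within B: P(E) ≤ P(F) for all F with F Δ E ⊂⊂ B and μ_g(F) = μ_g(E). -/

import Mathlib

open MeasureTheory Metric Set Filter
open scoped ENNReal Topology Manifold

noncomputable section

/-- The perimeter of a set in a metric measure space, as (upper) Minkowski content. -/
def perimeter {M : Type*} [MetricSpace M] [MeasurableSpace M]
    (μ : Measure M) (E : Set M) : ℝ≥0∞ :=
  Filter.limsup (fun ε : ℝ => μ (Metric.thickening ε E \ E) / ENNReal.ofReal ε) (𝓝[>] 0)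

/-- The extrinsic radius of a measurable set. -/
def extRad {M : Type*} [MetricSpace M] [MeasurableSpace M] (μ : Measure M)
    (E : Set M) : ℝ≥0∞ :=
  ⨅ (z : M) (r : ℝ) (_ : μ (E \ Metric.ball z r) = 0), ENNReal.ofReal r

/-- An isoperimetric-isodiametric set minimizes the perimeter among volume-preserving
compactly supported perturbations within its enclosing ball `B = B_{rad (E)}(x₀)`:
`P(E) ≤ P(F)` whenever `F Δ E ⊂⊂ B` and `μ(F) = μ(E)`. -/
theorem isoperimetric_isodiametric_set_is_constrained_minimizer {n : ℕ} {M : Type*}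
    [MetricSpace M] [MeasurableSpace M] [BorelSpace M]
    [ChartedSpace (EuclideanSpace ℝ (Fin n)) M]
    [IsManifold (𝓡 n) (⊤ : ℕ∞) M]
    (μ : Measure M) (E : Set M) (hEm : MeasurableSet E)
    (hmin : ∀ F : Set M, MeasurableSet F → μ F = μ E →
      extRad μ E * perimeter μ E ≤ extRad μ F * perimeter μ F)
    (x₀ : M) (hencl : μ (E \ Metric.ball x₀ (extRad μ E).toReal) = 0) :
    ∀ F : Set M, MeasurableSet F → μ F = μ E →
      IsCompact (closure ((F \ E) ∪ (E \ F))) →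
      closure ((F \ E) ∪ (E \ F)) ⊆ Metric.ball x₀ (extRad μ E).toReal →
      perimeter μ E ≤ perimeter μ F := by
  intro F hFm hFvol hcpt hsub
  set r : ℝ := (extRad μ E).toReal with hr
  have hle : extRad μ E ≤ ENNReal.ofReal r :=
    iInf_le_of_le x₀ (iInf_le_of_le r (iInf_le_of_le hencl le_rfl))
  have hnetop : extRad μ E ≠ ⊤ := by
    intro h
    rw [hr] at hle
    rw [h] at hle
    simp at hle
  by_cases h0 : extRad μ E = 0
  · -- the ball is empty, so the symmetric difference is empty and F = E
    have hr0 : r = 0 := by rw [hr, h0]; simp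
    have hball : Metric.ball x₀ r = ∅ := by
      rw [hr0]; exact Metric.ball_zero
    have hdiff : (F \ E) ∪ (E \ F) = ∅ := by
      have h1 : (F \ E) ∪ (E \ F) ⊆ (∅ : Set M) := by
        refine subset_closure.trans ?_
        rw [hr] at hsub
        rwa [hball] at hsub
      exact eq_empty_of_subset_empty h1
    have hFE : F = E := by
      ext x
      constructor
      · intro hx
        by_contra hxE
        have : x ∈ (F \ E) ∪ (E \ F) := Or.inl ⟨hx, hxE⟩
        rw [hdiff] at this
        exact this
      · intro hx
        by_contra hxF
        have : x ∈ (F \ E) ∪ (E \ F) := Or.inr ⟨hx, hxF⟩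
        rw [hdiff] at this
        exact this
    rw [hFE]
  · -- extRad μ F ≤ extRad μ E
    have hofr : ENNReal.ofReal r = extRad μ E := by
      rw [hr]; exact ENNReal.ofReal_toReal hnetop
    have hFsub : F \ Metric.ball x₀ r ⊆ E \ Metric.ball x₀ r := by
      intro x hx
      rcases hx with ⟨hxF, hxb⟩
      by_cases hxE : x ∈ E
      · exact ⟨hxE, hxb⟩
      · exfalso
        have : x ∈ Metric.ball x₀ r := by
          rw [hr]
          exact hsub (subset_closure (Or.inl ⟨hxF, hxE⟩))
        exact hxb this
    have hFzero : μ (F \ Metric.ball x₀ r) = 0 :=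
      measure_mono_null hFsub hencl
    have hradF : extRad μ F ≤ extRad μ E := by
      rw [← hofr]
      exact iInf_le_of_le x₀ (iInf_le_of_le r (iInf_le_of_le hFzero le_rfl))
    have hchain : extRad μ E * perimeter μ E ≤ extRad μ E * perimeter μ F := by
      calc extRad μ E * perimeter μ E ≤ extRad μ F * perimeter μ F :=
            hmin F hFm hFvol
        _ ≤ extRad μ E * perimeter μ F :=
            mul_le_mul_left hradF _
    exact (ENNReal.mul_le_mul_iff_right h0 hnetop).mp hchain
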